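/- Let l ≥ 6 be an integer and let h(x) = sin(lπx)/(l sin πx). Then for every x ∈ (0, 1/l), |h'(x)| ≤ (lπ/2)·((π/l)/sin(π/l))² ≤ 2l. -/

import Mathlib

open Real

lemma sin_mul_le (u b : ℝ) (h0 : 0 ≤ u) (hub : u ≤ b) (hb : b ≤ π) (hbpos : 0 < b) :
    Real.sin b * u ≤ Real.sin u * b := by
  have ha1 : (0:ℝ) ≤ 1 - u / b := by
    have : u / b ≤ 1 := (div_le_one hbpos).2 hub; linarith
  have ha2 : (0:ℝ) ≤ u / b := by positivity
  have key := strictConcaveOn_sin_Icc.concaveOn.2 (Set.mem_Icc.2 ⟨le_rfl, Real.pi_pos.le⟩)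
    (Set.mem_Icc.2 ⟨hbpos.le, hb⟩) ha1 ha2 (by ring)
  simp only [smul_eq_mul, mul_zero, zero_add, Real.sin_zero] at key
  have h1 : u / b * b = u := div_mul_cancel₀ u hbpos.ne'
  rw [h1] at key
  have := mul_le_mul_of_nonneg_right key hbpos.le
  calc Real.sin b * u = (u / b * Real.sin b) * b := by field_simp
    _ ≤ Real.sin u * b := this

lemma g_hasDerivAt (L : ℝ) (u : ℝ) :
    HasDerivAt (fun u => Real.sin (L*u) * Real.cos u - L * (Real.cos (L*u) * Real.sin u))
      ((L^2 - 1) * (Real.sin (L*u) * Real.sin u)) u := by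
  have hL : HasDerivAt (fun y : ℝ => L * y) (L * 1) u := (hasDerivAt_id u).const_mul L
  have h1 : HasDerivAt (fun y : ℝ => Real.sin (L*y)) (Real.cos (L*u) * (L*1)) u := hL.sin
  have h2 : HasDerivAt (fun y : ℝ => Real.cos (L*y)) (-Real.sin (L*u) * (L*1)) u := hL.cos
  have h3 := (h1.mul (Real.hasDerivAt_cos u)).sub
    ((h2.mul (Real.hasDerivAt_sin u)).const_mul L)
  refine h3.congr_deriv ?_
  ring

lemma g_deriv (L : ℝ) (u : ℝ) :
    deriv (fun u => Real.sin (L*u) * Real.cos u - L * (Real.cos (L*u) * Real.sin u)) u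
      = (L^2 - 1) * (Real.sin (L*u) * Real.sin u) := (g_hasDerivAt L u).deriv

lemma g_nonneg (L : ℝ) (hL : 1 ≤ L) (u : ℝ) (h0 : 0 ≤ u) (h1 : u ≤ π / L) :
    0 ≤ Real.sin (L*u) * Real.cos u - L * (Real.cos (L*u) * Real.sin u) := by
  have hLpos : (0:ℝ) < L := lt_of_lt_of_le one_pos hL
  set g := fun u => Real.sin (L*u) * Real.cos u - L * (Real.cos (L*u) * Real.sin u) with hg
  have mono : MonotoneOn g (Set.Icc 0 (π / L)) := by
    apply monotoneOn_of_deriv_nonneg (convex_Icc _ _)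
    · exact Continuous.continuousOn (by fun_prop)
    · intro y hy
      exact ((g_hasDerivAt L y).differentiableAt).differentiableWithinAt
    · intro y hy
      rw [interior_Icc, Set.mem_Ioo] at hy
      rw [g_deriv]
      have hy1 : 0 < Real.sin y := Real.sin_pos_of_pos_of_lt_pi hy.1
        (lt_of_lt_of_le hy.2 (by
          rw [div_le_iff₀ hLpos] at *
          nlinarith [Real.pi_pos]))
      have hy2 : 0 ≤ Real.sin (L*y) := Real.sin_nonneg_of_nonneg_of_le_pi
        (mul_nonneg hLpos.le hy.1.le) (by rw [mul_comm, ← le_div_iff₀ hLpos]; exact hy.2.le)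
      have : (0:ℝ) ≤ L^2 - 1 := by nlinarith
      positivity
  have h00 : (0:ℝ) ∈ Set.Icc (0:ℝ) (π / L) := ⟨le_rfl, by positivity⟩
  have huu : u ∈ Set.Icc (0:ℝ) (π / L) := ⟨h0, h1⟩
  have := mono h00 huu h0
  simpa [hg] using this

lemma g_le (L : ℝ) (hL : 1 ≤ L) (u : ℝ) (h0 : 0 ≤ u) :
    Real.sin (L*u) * Real.cos u - L * (Real.cos (L*u) * Real.sin u) ≤ L^2 * u^2 / 2 := by
  have hLpos : (0:ℝ) < L := lt_of_lt_of_le one_pos hL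
  set G := fun u => L^2 * u^2 / 2 -
    (Real.sin (L*u) * Real.cos u - L * (Real.cos (L*u) * Real.sin u)) with hG
  have hGd : ∀ y : ℝ, HasDerivAt G (L^2 * y - (L^2 - 1) * (Real.sin (L*y) * Real.sin y)) y := by
    intro y
    have h1 : HasDerivAt (fun y : ℝ => L^2 * y^2 / 2) (L^2 * y) y := by
      have := ((hasDerivAt_pow 2 y).const_mul (L^2)).div_const 2
      refine this.congr_deriv ?_
      ring
    have := h1.sub (g_hasDerivAt L y)
    exact this
  have mono : MonotoneOn G (Set.Ici 0) := by
    apply monotoneOn_of_deriv_nonneg (convex_Ici _)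
    · exact Continuous.continuousOn (by fun_prop)
    · intro y hy; exact (hGd y).differentiableAt.differentiableWithinAt
    · intro y hy
      rw [interior_Ici, Set.mem_Ioi] at hy
      rw [(hGd y).deriv]
      have hs1 : Real.sin (L*y) * Real.sin y ≤ y := by
        calc Real.sin (L*y) * Real.sin y ≤ |Real.sin (L*y) * Real.sin y| := le_abs_self _
          _ = |Real.sin (L*y)| * |Real.sin y| := abs_mul _ _
          _ ≤ 1 * |y| := by
              apply mul_le_mul (Real.abs_sin_le_one _) (Real.abs_sin_le_abs) (abs_nonneg _) one_pos.le
          _ = y := by rw [one_mul, abs_of_pos hy]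
      have hL2 : (0:ℝ) ≤ L^2 - 1 := by nlinarith
      nlinarith
  have := mono (Set.mem_Ici.2 le_rfl) (Set.mem_Ici.2 h0) h0
  simp only [hG, mul_zero, Real.sin_zero, Real.cos_zero, zero_mul, mul_one, zero_pow,
    mul_zero, zero_div, sub_zero, zero_sub, mul_zero] at this
  nlinarith [this]
theorem stmt11 (l : ℕ) (hl : 6 ≤ l) (x : ℝ) (hx : x ∈ Set.Ioo (0 : ℝ) (1 / (l : ℝ))) :
    |deriv (fun t : ℝ => Real.sin ((l : ℝ) * π * t) / ((l : ℝ) * Real.sin (π * t))) x| ≤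
        ((l : ℝ) * π / 2) * ((π / (l : ℝ)) / Real.sin (π / (l : ℝ))) ^ 2 ∧
      ((l : ℝ) * π / 2) * ((π / (l : ℝ)) / Real.sin (π / (l : ℝ))) ^ 2 ≤ 2 * (l : ℝ) := by
  obtain ⟨hx0, hx1⟩ := hx
  have hπ := Real.pi_pos
  have hπ1 := Real.pi_lt_d2
  set L : ℝ := (l : ℝ) with hLdef
  have hL6 : (6:ℝ) ≤ L := by rw [hLdef]; exact_mod_cast hl
  have hLpos : (0:ℝ) < L := by linarith
  have hL1 : (1:ℝ) ≤ L := by linarith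
  clear_value L
  clear hLdef hl
  have hub : π * x < π / L := by
    rw [lt_div_iff₀ hLpos]
    have hxL : x * L < 1 := (lt_div_iff₀ hLpos).1 hx1
    nlinarith
  have hbpi : π / L ≤ π / 6 := by
    apply div_le_div_of_nonneg_left hπ.le (by norm_num) hL6
  have hu0 : 0 < π * x := by positivity
  have hupi : π * x < π := lt_of_lt_of_le hub (by nlinarith)
  have hs : 0 < Real.sin (π * x) := Real.sin_pos_of_pos_of_lt_pi hu0 hupi
  have hbpos : 0 < π / L := by positivity
  have hsb : 0 < Real.sin (π / L) :=
    Real.sin_pos_of_pos_of_lt_pi hbpos (lt_of_le_of_lt hbpi (by nlinarith))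
  -- sin(π/L) ≥ 3/L
  have hsb3 : 3 / L ≤ Real.sin (π / L) := by
    have := sin_mul_le (π / L) (π / 6) hbpos.le hbpi (by nlinarith) (by positivity)
    rw [Real.sin_pi_div_six] at this
    rw [div_le_iff₀ hLpos]
    have h2 : 1/2 * (π/L) * (6*L/π) ≤ Real.sin (π/L) * (π/6) * (6*L/π) :=
      mul_le_mul_of_nonneg_right this (by positivity)
    have e1 : 1/2 * (π/L) * (6*L/π) = 3 := by field_simp; ring
    have e2 : Real.sin (π/L) * (π/6) * (6*L/π) = Real.sin (π/L) * L := by field_simp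
    rw [e1, e2] at h2
    exact h2
  have hratio : (π / L) / Real.sin (π / L) ≤ π / 3 := by
    calc (π / L) / Real.sin (π / L) ≤ (π / L) / (3 / L) :=
          div_le_div_of_nonneg_left hbpos.le (by positivity) hsb3
      _ = π / 3 := by field_simp
  constructor
  · -- derivative computation
    have hnum : HasDerivAt (fun t : ℝ => Real.sin (L * π * t))
        (Real.cos (L * π * x) * (L * π * 1)) x := ((hasDerivAt_id x).const_mul (L * π)).sin
    have hden : HasDerivAt (fun t : ℝ => L * Real.sin (π * t))
        (L * (Real.cos (π * x) * (π * 1))) x :=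
      (((hasDerivAt_id x).const_mul π).sin).const_mul L
    have hden0 : L * Real.sin (π * x) ≠ 0 := by positivity
    have hd : deriv (fun t : ℝ => Real.sin (L * π * t) / (L * Real.sin (π * t))) x = _ :=
      (hnum.div hden hden0).deriv
    rw [hd]
    set Gx : ℝ := Real.sin (L * π * x) * Real.cos (π * x) -
      L * (Real.cos (L * π * x) * Real.sin (π * x)) with hGx
    have hg0 : 0 ≤ Gx := by
      have := g_nonneg L hL1 (π * x) hu0.le hub.le
      rw [← mul_assoc] at this
      exact this
    have hgle : Gx ≤ L ^ 2 * (π * x) ^ 2 / 2 := by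
      have := g_le L hL1 (π * x) hu0.le
      rw [← mul_assoc] at this
      exact this
    have hEq : (Real.cos (L * π * x) * (L * π * 1) * (L * Real.sin (π * x)) -
        Real.sin (L * π * x) * (L * (Real.cos (π * x) * (π * 1)))) /
        (L * Real.sin (π * x)) ^ 2
        = -(π * Gx / (L * Real.sin (π * x) ^ 2)) := by
      rw [hGx]
      field_simp
      ring
    rw [hEq, abs_neg, abs_of_nonneg (by positivity)]
    calc π * Gx / (L * Real.sin (π * x) ^ 2)
        ≤ π * (L ^ 2 * (π * x) ^ 2 / 2) / (L * Real.sin (π * x) ^ 2) := by gcongr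
      _ = (L * π / 2) * ((π * x) / Real.sin (π * x)) ^ 2 := by field_simp
      _ ≤ (L * π / 2) * ((π / L) / Real.sin (π / L)) ^ 2 := by
          have hdd : (π * x) / Real.sin (π * x) ≤ (π / L) / Real.sin (π / L) := by
            rw [div_le_div_iff₀ hs hsb]
            have := sin_mul_le (π * x) (π / L) hu0.le hub.le (by nlinarith) hbpos
            nlinarith
          exact mul_le_mul_of_nonneg_left (pow_le_pow_left₀ (by positivity) hdd 2)
            (by positivity)
  · calc (L * π / 2) * ((π / L) / Real.sin (π / L)) ^ 2
        ≤ (L * π / 2) * (π / 3) ^ 2 := by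
          exact mul_le_mul_of_nonneg_left (pow_le_pow_left₀ (by positivity) hratio 2)
            (by positivity)
      _ ≤ 2 * L := by
          have hcube : π ^ 3 < 36 := by nlinarith [hπ, hπ1, sq_nonneg (π - 3.15), sq_nonneg π]
          have hmul : L * π ^ 3 ≤ L * 36 := mul_le_mul_of_nonneg_left hcube.le hLpos.le
          nlinarith [hmul]
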